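/- If the noise rate satisfies e ∈ [0, 1/2) and the smoothing parameter is chosen as γ = (γ* − e)/(1 − 2e), then the coefficient γ* − γ − e + 2γe vanishes, and consequently E_{(x,ỹ)∼D̃}[ℓ(f(x), ỹ^γ)] = E_{(x,y)∼D}[ℓ(f(x), y^{γ*})] for every f : X → (0,1) for which the expectations are finite; in particular, when e = 0 this optimal choice is γ = γ*. -/

import Mathlib

open MeasureTheory Real

/-- Binary cross-entropy loss: `ℓ(t, y) = −y log t − (1−y) log(1−t)` with labels in {0,1}
encoded as `Bool` (`true = 1`, `false = 0`). -/
noncomputable def closs (t : ℝ) (y : Bool) : ℝ :=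
  if y then -Real.log t else -Real.log (1 - t)

/-- Flipping the boolean coordinate as a measurable equivalence. -/
def flipEquiv (X : Type*) [MeasurableSpace X] : (X × Bool) ≃ᵐ (X × Bool) where
  toFun := fun xy => (xy.1, !xy.2)
  invFun := fun xy => (xy.1, !xy.2)
  left_inv := fun xy => by simp
  right_inv := fun xy => by simp
  measurable_toFun := by
    show Measurable fun xy : X × Bool => (xy.1, !xy.2)
    have hb : Measurable fun xy : X × Bool => !xy.2 :=
      (Measurable.of_discrete (f := Bool.not)).comp measurable_snd
    exact measurable_fst.prodMk hb
  measurable_invFun := by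
    show Measurable fun xy : X × Bool => (xy.1, !xy.2)
    have hb : Measurable fun xy : X × Bool => !xy.2 :=
      (Measurable.of_discrete (f := Bool.not)).comp measurable_snd
    exact measurable_fst.prodMk hb

/-- Under symmetric label noise of rate e ∈ [0,1/2), choosing the smoothing
parameter `γ = (γ* − e)/(1 − 2e)` makes the coefficient `γ* − γ − e + 2γe` vanish, so that
`E_{D̃}[ℓ(f(x), ỹ^γ)] = E_D[ℓ(f(x), y^{γ*})]` for every `f : X → (0,1)` with finite
expectations; in particular `e = 0` gives `γ = γ*`. -/
theorem stmt10 {X : Type*} [MeasurableSpace X]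
    (D : Measure (X × Bool)) [IsProbabilityMeasure D]
    (e : ℝ) (he : e ∈ Set.Ico (0:ℝ) (1/2))
    (Dnoisy : Measure (X × Bool))
    (hD : Dnoisy = (ENNReal.ofReal (1 - e)) • D
        + (ENNReal.ofReal e) • D.map (fun xy => (xy.1, !xy.2)))
    (γstar γ : ℝ) (hγ : γ = (γstar - e) / (1 - 2 * e)) :
    (γstar - γ - e + 2 * γ * e = 0) ∧
    (∀ f : X → ℝ, (∀ x, f x ∈ Set.Ioo (0:ℝ) 1) →
      Integrable (fun xy : X × Bool => closs (f xy.1) xy.2) D →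
      Integrable (fun xy : X × Bool => closs (f xy.1) (!xy.2)) D →
      Integrable (fun xy : X × Bool =>
        γ * closs (f xy.1) xy.2 + (1 - γ) * closs (f xy.1) (!xy.2)) Dnoisy →
      (∫ xy, (γ * closs (f xy.1) xy.2 + (1 - γ) * closs (f xy.1) (!xy.2)) ∂Dnoisy)
        = ∫ xy, (γstar * closs (f xy.1) xy.2 + (1 - γstar) * closs (f xy.1) (!xy.2)) ∂D) ∧
    (e = 0 → γ = γstar) := by
  obtain ⟨he0, he2⟩ := he
  have hne : (1 : ℝ) - 2 * e ≠ 0 := by nlinarith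
  have hcoef : γstar - γ - e + 2 * γ * e = 0 := by
    rw [hγ]; linear_combination -(div_mul_cancel₀ (γstar - e) hne)
  refine ⟨hcoef, ?_, ?_⟩
  · intro f hf hI1 hI2 _
    have hmap : D.map (fun xy : X × Bool => (xy.1, !xy.2)) = D.map (flipEquiv X) := rfl
    -- integrability of the γ-combination under D and under the flipped D
    have hg1 : Integrable (fun xy : X × Bool =>
        γ * closs (f xy.1) xy.2 + (1 - γ) * closs (f xy.1) (!xy.2)) D :=
      (hI1.const_mul γ).add (hI2.const_mul (1 - γ))
    have hg2 : Integrable (fun xy : X × Bool =>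
        γ * closs (f xy.1) xy.2 + (1 - γ) * closs (f xy.1) (!xy.2))
        (D.map (flipEquiv X)) := by
      rw [MeasureTheory.integrable_map_equiv]
      have hcongr : ((fun xy : X × Bool => γ * closs (f xy.1) xy.2 + (1 - γ) * closs (f xy.1) (!xy.2))
          ∘ (flipEquiv X)) = fun xy : X × Bool =>
            γ * closs (f xy.1) (!xy.2) + (1 - γ) * closs (f xy.1) xy.2 := by
        funext xy; simp [flipEquiv]
      rw [hcongr]
      exact (hI2.const_mul γ).add (hI1.const_mul (1 - γ))
    rw [hD, hmap, integral_add_measure (hg1.smul_measure ENNReal.ofReal_ne_top)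
        (hg2.smul_measure ENNReal.ofReal_ne_top),
      integral_smul_measure, integral_smul_measure,
      MeasureTheory.integral_map_equiv]
    simp only [flipEquiv, MeasurableEquiv.coe_mk, Equiv.coe_fn_mk, Bool.not_not]
    rw [ENNReal.toReal_ofReal (by linarith), ENNReal.toReal_ofReal he0]
    rw [integral_add (hI1.const_mul γ) (hI2.const_mul (1 - γ)),
        integral_add (hI2.const_mul γ) (hI1.const_mul (1 - γ)),
        integral_add (hI1.const_mul γstar) (hI2.const_mul (1 - γstar)),
        integral_const_mul, integral_const_mul, integral_const_mul,
        integral_const_mul, integral_const_mul, integral_const_mul]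
    set A := ∫ xy, closs (f xy.1) xy.2 ∂D
    set B := ∫ xy, closs (f xy.1) (!xy.2) ∂D
    have h1 : γstar = γ - 2 * γ * e + e := by linarith
    simp only [smul_eq_mul]; rw [h1]; ring
  · intro h0
    rw [hγ, h0]; ring
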